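/- The generalized phase gate S conjugates the Pauli matrices according to S * X * Sᴴ = τ • (X * Z) and S * Z * Sᴴ = Z, for every dimension d ≥ 1 (this is the matrix identity underlying the tableau update rule z ← z + x with phase update for the S gate). -/

import Mathlib

open Matrix Complex

/-- The primitive `d`-th root of unity `ω = exp(2πi/d)`. -/
noncomputable def omega (d : ℕ) : ℂ := Complex.exp (2 * Real.pi * Complex.I / d)

/-- The generalized Pauli shift matrix `X` on a `d`-dimensional qudit:
`X i j = 1` iff `i = j + 1 (mod d)`. -/
def PauliX (d : ℕ) [NeZero d] : Matrix (Fin d) (Fin d) ℂ :=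
  Matrix.of fun i j => if i = j + 1 then 1 else 0

/-- The generalized Pauli phase matrix `Z = diag(1, ω, ω², …)`. -/
noncomputable def PauliZ (d : ℕ) [NeZero d] : Matrix (Fin d) (Fin d) ℂ :=
  Matrix.diagonal fun j => omega d ^ (j : ℕ)

/-- The secondary phase `τ = exp(πi(d²+1)/d)`, satisfying `τ² = ω`. -/
noncomputable def tau (d : ℕ) : ℂ :=
  Complex.exp (Real.pi * Complex.I * (d ^ 2 + 1) / d)

/-- The generalized phase gate `S = diag(τ^{j²})`. -/
noncomputable def PhaseS (d : ℕ) : Matrix (Fin d) (Fin d) ℂ :=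
  Matrix.diagonal fun j => tau d ^ ((j : ℕ) ^ 2)

lemma tau_ne_zero' (d : ℕ) : tau d ≠ 0 := Complex.exp_ne_zero _

lemma tau_pow_two_d' (d : ℕ) [NeZero d] : tau d ^ (2 * d) = 1 := by
  have hd : (d : ℂ) ≠ 0 := Nat.cast_ne_zero.mpr (NeZero.ne d)
  rw [tau, ← Complex.exp_nat_mul]
  rw [show ((2 * d : ℕ) : ℂ) * (Real.pi * Complex.I * (d ^ 2 + 1) / d)
      = ((d ^ 2 + 1 : ℕ) : ℤ) * (2 * Real.pi * Complex.I) by push_cast; field_simp]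
  exact Complex.exp_int_mul_two_pi_mul_I _

lemma tau_pow_d_sq' (d : ℕ) [NeZero d] : tau d ^ (d ^ 2) = 1 := by
  have hd : (d : ℂ) ≠ 0 := Nat.cast_ne_zero.mpr (NeZero.ne d)
  obtain ⟨m, hm⟩ : 2 ∣ d * (d ^ 2 + 1) := by
    rcases Nat.even_or_odd d with h | h
    · exact Dvd.dvd.mul_right h.two_dvd _
    · exact Dvd.dvd.mul_left (by simpa using (h.pow).add_one.two_dvd) _
  have hmC : (d : ℂ) * ((d : ℂ) ^ 2 + 1) = 2 * m := by exact_mod_cast congrArg (Nat.cast (R := ℂ)) hm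
  rw [tau, ← Complex.exp_nat_mul]
  rw [show ((d ^ 2 : ℕ) : ℂ) * (Real.pi * Complex.I * (d ^ 2 + 1) / d)
      = ((m : ℕ) : ℤ) * (2 * Real.pi * Complex.I) by
    push_cast
    have h1 : ((d:ℂ) ^ 2) * (Real.pi * Complex.I * ((d:ℂ) ^ 2 + 1) / d)
        = Real.pi * Complex.I * ((d:ℂ) * ((d:ℂ) ^ 2 + 1)) := by field_simp
    rw [h1, hmC]; ring]
  exact Complex.exp_int_mul_two_pi_mul_I _

lemma tau_sq_eq_omega' (d : ℕ) [NeZero d] : tau d ^ 2 = omega d := by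
  have hd : (d : ℂ) ≠ 0 := Nat.cast_ne_zero.mpr (NeZero.ne d)
  rw [tau, omega, ← Complex.exp_nat_mul]
  rw [show ((2 : ℕ) : ℂ) * (Real.pi * Complex.I * (d ^ 2 + 1) / d)
      = 2 * Real.pi * Complex.I / d + ((d : ℤ) : ℂ) * (2 * Real.pi * Complex.I) by
    push_cast; field_simp; ring]
  rw [Complex.exp_add, Complex.exp_int_mul_two_pi_mul_I, mul_one]

lemma star_tau' (d : ℕ) : (starRingEnd ℂ) (tau d) = (tau d)⁻¹ := by
  rw [tau, ← Complex.exp_conj, ← Complex.exp_neg]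
  congr 1
  simp [map_div₀, Complex.conj_I]
  ring

lemma tau_pow_sq_shift (d : ℕ) [NeZero d] (a k : ℕ) :
    tau d ^ ((a + d * k) ^ 2) = tau d ^ (a ^ 2) := by
  have h : (a + d * k) ^ 2 = a ^ 2 + (2 * d) * (a * k) + (d ^ 2) * (k ^ 2) := by ring
  rw [h, pow_add, pow_add, pow_mul (tau d) (2 * d) (a * k), pow_mul (tau d) (d ^ 2) (k ^ 2),
    tau_pow_two_d' d, tau_pow_d_sq' d, one_pow, one_pow, mul_one, mul_one]

lemma tau_pow_sq_mod (d : ℕ) [NeZero d] (a : ℕ) :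
    tau d ^ ((a % d) ^ 2) = tau d ^ (a ^ 2) := by
  conv_rhs => rw [show a = a % d + d * (a / d) from (Nat.mod_add_div a d).symm]
  rw [tau_pow_sq_shift]


theorem phase_gate_conjugation (d : ℕ) [NeZero d] :
    PhaseS d * PauliX d * (PhaseS d)ᴴ = tau d • (PauliX d * PauliZ d) ∧
    PhaseS d * PauliZ d * (PhaseS d)ᴴ = PauliZ d := by
  have hτ : tau d ≠ 0 := tau_ne_zero' d
  have hstar : ∀ n : ℕ, star (tau d ^ n) = (tau d ^ n)⁻¹ := by
    intro n
    rw [star_pow, show star (tau d) = (tau d)⁻¹ from star_tau' d, inv_pow]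
  constructor
  · ext i j
    simp only [PhaseS, Matrix.diagonal_conjTranspose]
    rw [Matrix.mul_diagonal, Matrix.diagonal_mul]
    simp only [PauliX, PauliZ, Matrix.smul_apply, smul_eq_mul, Matrix.mul_diagonal,
      Matrix.of_apply, Pi.star_apply]
    by_cases h : i = j + 1
    · simp only [h, if_pos rfl, hstar]
      have hval : ((j + 1 : Fin d) : ℕ) = ((j : ℕ) + 1) % d := by
        simp [Fin.add_def]
      have key : tau d ^ (((j + 1 : Fin d) : ℕ) ^ 2) = tau d ^ (((j : ℕ) + 1) ^ 2) := by
        rw [hval, tau_pow_sq_mod]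
      rw [key, ← tau_sq_eq_omega', show ((j:ℕ) + 1) ^ 2 = (j:ℕ) ^ 2 + (2 * (j:ℕ) + 1) by ring,
        pow_add]
      field_simp
      ring
    · simp [h]
  · ext i j
    simp only [PhaseS, PauliZ, Matrix.diagonal_conjTranspose, Matrix.diagonal_mul_diagonal,
      Matrix.diagonal_apply, Pi.star_apply]
    by_cases h : i = j
    · subst h
      simp only [if_pos rfl, hstar]
      field_simp
    · simp [h]
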